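/- Let X₁, …, X_n be integrable real-valued random variables on (Ω, 𝓕, ℙ), S = X₁ + ⋯ + X_n, and let γ, γ₁, …, γ_n > 0 with β = (1/γ)/((1/γ) + Σ_j 1/γ_j) and β_i = (1/γ_i)/((1/γ) + Σ_j 1/γ_j). For θ in an interval (a,b), let u_θ and u_{i,θ} be nonnegative measurable functions with E[u_θ(S)] = 1 and E[u_{i,θ}(X_i)] = 1, and set ρ_θ(S) = E[S u_θ(S)] and ρ_{i,θ}(X_i) = E[X_i u_{i,θ}(X_i)], assumed finite. Assume: (i) θ ↦ ρ_θ(S) is continuous on (a,b) with lim_{θ→a⁺} ρ_θ(S) = F_S^{-1+}(0) and lim_{θ→b⁻} ρ_θ(S) = F_S^{-1}(1); and (ii) for each i, θ ↦ ρ_{i,θ}(X_i) is continuous on (a,b) with lim_{θ→a⁺} ρ_{i,θ}(X_i) = F_{X_i}^{-1+}(0) and lim_{θ→b⁻} ρ_{i,θ}(X_i) = F_{X_i}^{-1}(1) (limits in [−∞,+∞]). Define K(θ) = (1−β) ρ_θ(S) + β Σ_{j=1}^n ρ_{j,θ}(X_j). Then the open interval (F_S^{-1+}(0), F_S^{-1}(1))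 is contained in K((a,b)), there exists a random variable Θ taking values in (a,b) extended by its endpoints (with K extended there by its one-sided limits) such that K(Θ) = S ℙ-almost surely, and the random variables H_i := ρ_{i,Θ}(X_i) − β_i (Σ_{j=1}^n ρ_{j,Θ}(X_j) − ρ_Θ(S)), i = 1, …, n, satisfy Σ_{i=1}^n H_i = S ℙ-almost surely. -/

import Mathlib

open MeasureTheory Filter Set

/-- The right quantile of `Z` at level `0` under the measure `μ`,
`F_Z^{-1+}(0) = sup {x : F_Z(x) ≤ 0}` (the essential infimum), as an extended real. -/
noncomputable def rq0 {Ω : Type*} [MeasurableSpace Ω] (μ : Measure Ω) (Z : Ω → ℝ) : EReal :=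
  sSup ((fun x : ℝ => (x : EReal)) '' {x : ℝ | μ {ω | Z ω ≤ x} = 0})

/-- The left quantile of `Z` at level `1` under the measure `μ`,
`F_Z^{-1}(1) = inf {x : ℙ(Z > x) = 0}` (the essential supremum), as an extended real. -/
noncomputable def lq1 {Ω : Type*} [MeasurableSpace Ω] (μ : Measure Ω) (Z : Ω → ℝ) : EReal :=
  sInf ((fun x : ℝ => (x : EReal)) '' {x : ℝ | μ {ω | x < Z ω} = 0})

/-- The filter of real numbers `θ ∈ (a,b)` tending to the left end-point `a` from the right,
for extended real end-points `a < b`. -/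
noncomputable def rightLimFilter (a b : EReal) : Filter ℝ :=
  Filter.comap (fun θ : ℝ => (θ : EReal)) (nhdsWithin a (Set.Ioo a b))

/-- The filter of real numbers `θ ∈ (a,b)` tending to the right end-point `b` from the left,
for extended real end-points `a < b`. -/
noncomputable def leftLimFilter (a b : EReal) : Filter ℝ :=
  Filter.comap (fun θ : ℝ => (θ : EReal)) (nhdsWithin b (Set.Ioo a b))

namespace StmtAux


lemma coe_sum {ι : Type*} (s : Finset ι) (f : ι → ℝ) :
    ((∑ j ∈ s, f j : ℝ) : EReal) = ∑ j ∈ s, (f j : EReal) := by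
  classical
  induction s using Finset.induction with
  | empty => simp
  | insert _ _ h ih => simp [Finset.sum_insert h, EReal.coe_add, ih]

lemma sum_ne_top {ι : Type*} (s : Finset ι) (f : ι → EReal) (h : ∀ j ∈ s, f j ≠ ⊤) :
    ∑ j ∈ s, f j ≠ ⊤ := by
  classical
  induction s using Finset.induction with
  | empty => simp
  | insert _ _ hmem ih =>
    rename_i a s'
    rw [Finset.sum_insert hmem]
    exact (EReal.add_lt_top (h a (Finset.mem_insert_self _ _))
      (ih fun j hj => h j (Finset.mem_insert_of_mem hj))).ne

lemma sum_ne_bot {ι : Type*} (s : Finset ι) (f : ι → EReal) (h : ∀ j ∈ s, f j ≠ ⊥) :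
    ∑ j ∈ s, f j ≠ ⊥ := by
  classical
  induction s using Finset.induction with
  | empty => simp
  | insert _ _ hmem ih =>
    rename_i a s'
    rw [Finset.sum_insert hmem, Ne, EReal.add_eq_bot_iff]
    push_neg
    exact ⟨h a (Finset.mem_insert_self _ _), ih fun j hj => h j (Finset.mem_insert_of_mem hj)⟩

lemma sum_eq_bot {ι : Type*} (s : Finset ι) (f : ι → EReal) {j : ι} (hj : j ∈ s)
    (hfj : f j = ⊥) : ∑ k ∈ s, f k = ⊥ := by
  classical
  rw [← Finset.add_sum_erase _ _ hj, hfj, EReal.bot_add]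

lemma sum_eq_top {ι : Type*} (s : Finset ι) (f : ι → EReal) {j : ι} (hj : j ∈ s)
    (hfj : f j = ⊤) (hne : ∀ k ∈ s, f k ≠ ⊥) : ∑ k ∈ s, f k = ⊤ := by
  classical
  rw [← Finset.add_sum_erase _ _ hj, hfj, EReal.top_add_of_ne_bot]
  exact sum_ne_bot _ _ fun k hk => hne k (Finset.mem_of_mem_erase hk)

/-- All terms real if a sum of non-top `EReal`s is real. -/
lemma terms_real_of_sum_real {ι : Type*} (s : Finset ι) (f : ι → EReal)
    (htop : ∀ j ∈ s, f j ≠ ⊤) (m : ℝ) (hsum : ∑ j ∈ s, f j = (m : EReal)) :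
    ∀ j ∈ s, ∃ r : ℝ, f j = (r : EReal) := by
  intro j hj
  have hbot : f j ≠ ⊥ := by
    intro hb
    rw [sum_eq_bot s f hj hb] at hsum
    exact (EReal.bot_ne_coe m) hsum
  lift f j to ℝ using ⟨htop j hj, hbot⟩ with r
  exact ⟨r, rfl⟩

/-- Convex combination identity in `EReal`. -/
lemma combo_eq (c : ℝ) (h0 : 0 ≤ c) (h1 : c ≤ 1) :
    ∀ (x : EReal), x ≠ ⊤ → ((1 - c : ℝ) : EReal) * x + (c : EReal) * x = x := by
  intro x hx
  induction x with
  | bot =>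
    rcases eq_or_lt_of_le h0 with h | h
    · rw [← h]
      have h1b : ((1 - 0 : ℝ) : EReal) * (⊥ : EReal) = ⊥ := EReal.coe_mul_bot_of_pos (by norm_num)
      rw [h1b]
      norm_num
    · rw [EReal.coe_mul_bot_of_pos h, EReal.add_bot]
  | coe r =>
    rw [← EReal.coe_mul, ← EReal.coe_mul, ← EReal.coe_add]
    norm_num [sub_mul, one_mul]
  | top => exact absurd rfl hx


section Quantile

variable {Ω : Type*} [MeasurableSpace Ω] (P : Measure Ω) [IsProbabilityMeasure P] (Z : Ω → ℝ)

lemma rq0_ne_top : rq0 P Z ≠ ⊤ := by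
  intro h
  have hall : ∀ k : ℕ, P {ω | Z ω ≤ (k : ℝ)} = 0 := by
    intro k
    have := (sSup_eq_top.1 h) ((k : ℝ) : EReal) (EReal.coe_lt_top _)
    rcases this with ⟨e, ⟨x, hx0, rfl⟩, hlt⟩
    have hkx : (k : ℝ) ≤ x := (EReal.coe_lt_coe_iff.1 hlt).le
    exact measure_mono_null (fun ω hω => le_trans hω hkx) hx0
  have huniv : (Set.univ : Set Ω) ⊆ ⋃ k : ℕ, {ω | Z ω ≤ (k : ℝ)} := by
    intro ω _
    rcases exists_nat_ge (Z ω) with ⟨k, hk⟩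
    exact Set.mem_iUnion.2 ⟨k, hk⟩
  have : P (Set.univ : Set Ω) = 0 :=
    measure_mono_null huniv (measure_iUnion_null hall)
  rw [measure_univ] at this
  exact one_ne_zero this

lemma lq1_ne_bot : lq1 P Z ≠ ⊥ := by
  intro h
  have hall : ∀ k : ℕ, P {ω | -(k : ℝ) < Z ω} = 0 := by
    intro k
    have := (sInf_eq_bot.1 h) ((-(k : ℝ)) : EReal) (EReal.bot_lt_coe _)
    rcases this with ⟨e, ⟨x, hx0, rfl⟩, hlt⟩
    have hkx : x ≤ -(k : ℝ) := (EReal.coe_lt_coe_iff.1 hlt).le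
    exact measure_mono_null (fun ω hω => lt_of_le_of_lt hkx hω) hx0
  have huniv : (Set.univ : Set Ω) ⊆ ⋃ k : ℕ, {ω | -(k : ℝ) < Z ω} := by
    intro ω _
    rcases exists_nat_gt (-(Z ω)) with ⟨k, hk⟩
    exact Set.mem_iUnion.2 ⟨k, by simp only [Set.mem_setOf_eq]; linarith⟩
  have : P (Set.univ : Set Ω) = 0 :=
    measure_mono_null huniv (measure_iUnion_null hall)
  rw [measure_univ] at this
  exact one_ne_zero this

lemma ae_rq0_le : ∀ᵐ ω ∂P, rq0 P Z ≤ ((Z ω : ℝ) : EReal) := by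
  rw [MeasureTheory.ae_iff]
  have hsub : {ω | ¬ rq0 P Z ≤ ((Z ω : ℝ) : EReal)} ⊆
      ⋃ q : ℚ, ({ω | Z ω ≤ (q : ℝ)} ∩ {_ω | P {ω' | Z ω' ≤ (q : ℝ)} = 0}) := by
    intro ω hω
    rw [Set.mem_setOf_eq, not_le] at hω
    rcases lt_sSup_iff.1 hω with ⟨e, ⟨x, hx0, rfl⟩, hlt⟩
    have hzx : Z ω < x := EReal.coe_lt_coe_iff.1 hlt
    rcases exists_rat_btwn hzx with ⟨q, hq1, hq2⟩
    refine Set.mem_iUnion.2 ⟨q, hq1.le, ?_⟩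
    exact measure_mono_null (fun ω' hω' => le_trans hω' hq2.le) hx0
  refine measure_mono_null hsub (measure_iUnion_null fun q => ?_)
  by_cases hq : P {ω' | Z ω' ≤ (q : ℝ)} = 0
  · exact measure_mono_null Set.inter_subset_left hq
  · have : ({ω | Z ω ≤ (q : ℝ)} ∩ {_ω | P {ω' | Z ω' ≤ (q : ℝ)} = 0}) = ∅ := by
      ext ω; simp [hq]
    simp [this]

lemma ae_le_lq1 : ∀ᵐ ω ∂P, ((Z ω : ℝ) : EReal) ≤ lq1 P Z := by
  rw [MeasureTheory.ae_iff]
  have hsub : {ω | ¬ ((Z ω : ℝ) : EReal) ≤ lq1 P Z} ⊆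
      ⋃ q : ℚ, ({ω | (q : ℝ) < Z ω} ∩ {_ω | P {ω' | (q : ℝ) < Z ω'} = 0}) := by
    intro ω hω
    rw [Set.mem_setOf_eq, not_le] at hω
    rcases sInf_lt_iff.1 hω with ⟨e, ⟨x, hx0, rfl⟩, hlt⟩
    have hzx : x < Z ω := EReal.coe_lt_coe_iff.1 hlt
    rcases exists_rat_btwn hzx with ⟨q, hq1, hq2⟩
    refine Set.mem_iUnion.2 ⟨q, hq2, ?_⟩
    exact measure_mono_null (fun ω' hω' => lt_of_le_of_lt hq1.le hω') hx0
  refine measure_mono_null hsub (measure_iUnion_null fun q => ?_)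
  by_cases hq : P {ω' | (q : ℝ) < Z ω'} = 0
  · exact measure_mono_null Set.inter_subset_left hq
  · have : ({ω | (q : ℝ) < Z ω} ∩ {_ω | P {ω' | (q : ℝ) < Z ω'} = 0}) = ∅ := by
      ext ω; simp [hq]
    simp [this]

end Quantile


section Filters

variable {a b : EReal}

lemma exists_mem_nwa (hab : a < b) {U : Set EReal} (hU : U ∈ nhdsWithin a (Set.Ioo a b)) :
    ∃ θ : ℝ, (θ : EReal) ∈ U ∧ (θ : EReal) ∈ Set.Ioo a b := by
  have hcl : a ∈ closure (Set.Ioo a b) := by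
    rw [closure_Ioo hab.ne]; exact ⟨le_refl a, hab.le⟩
  have hne : (nhdsWithin a (Set.Ioo a b)).NeBot := mem_closure_iff_nhdsWithin_neBot.1 hcl
  have : U ∩ Set.Ioo a b ∈ nhdsWithin a (Set.Ioo a b) :=
    Filter.inter_mem hU self_mem_nhdsWithin
  rcases Filter.nonempty_of_mem this with ⟨x, hxU, hxI⟩
  have hxb : x ≠ ⊥ := (bot_le.trans_lt hxI.1).ne'
  have hxt : x ≠ ⊤ := (hxI.2.trans_le le_top).ne
  lift x to ℝ using ⟨hxt, hxb⟩ with θ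
  exact ⟨θ, hxU, hxI⟩

lemma exists_mem_nwb (hab : a < b) {U : Set EReal} (hU : U ∈ nhdsWithin b (Set.Ioo a b)) :
    ∃ θ : ℝ, (θ : EReal) ∈ U ∧ (θ : EReal) ∈ Set.Ioo a b := by
  have hcl : b ∈ closure (Set.Ioo a b) := by
    rw [closure_Ioo hab.ne]; exact ⟨hab.le, le_refl b⟩
  have hne : (nhdsWithin b (Set.Ioo a b)).NeBot := mem_closure_iff_nhdsWithin_neBot.1 hcl
  have : U ∩ Set.Ioo a b ∈ nhdsWithin b (Set.Ioo a b) :=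
    Filter.inter_mem hU self_mem_nhdsWithin
  rcases Filter.nonempty_of_mem this with ⟨x, hxU, hxI⟩
  have hxb : x ≠ ⊥ := (bot_le.trans_lt hxI.1).ne'
  have hxt : x ≠ ⊤ := (hxI.2.trans_le le_top).ne
  lift x to ℝ using ⟨hxt, hxb⟩ with θ
  exact ⟨θ, hxU, hxI⟩

lemma rlf_exists (hab : a < b) {p : ℝ → Prop} (h : ∀ᶠ θ in rightLimFilter a b, p θ) :
    ∃ θ : ℝ, (θ : EReal) ∈ Set.Ioo a b ∧ p θ := by
  rw [rightLimFilter, Filter.eventually_comap] at h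
  rcases exists_mem_nwa hab h with ⟨θ, hθU, hθI⟩
  exact ⟨θ, hθI, hθU θ rfl⟩

lemma llf_exists (hab : a < b) {p : ℝ → Prop} (h : ∀ᶠ θ in leftLimFilter a b, p θ) :
    ∃ θ : ℝ, (θ : EReal) ∈ Set.Ioo a b ∧ p θ := by
  rw [leftLimFilter, Filter.eventually_comap] at h
  rcases exists_mem_nwb hab h with ⟨θ, hθU, hθI⟩
  exact ⟨θ, hθI, hθU θ rfl⟩

lemma rlf_bound (hab : a < b) {p : ℝ → Prop} (h : ∀ᶠ θ in rightLimFilter a b, p θ) :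
    ∃ d : EReal, a < d ∧ ∀ θ : ℝ, (θ : EReal) ∈ Set.Ioo a b → (θ : EReal) < d → p θ := by
  rw [rightLimFilter, Filter.eventually_comap] at h
  rcases mem_nhdsWithin.1 h with ⟨O, hOopen, haO, hOsub⟩
  rcases exists_Ico_subset_of_mem_nhds (hOopen.mem_nhds haO) ⟨b, hab⟩ with ⟨d, hd, hIco⟩
  refine ⟨d, hd, fun θ hθI hθd => ?_⟩
  have : (θ : EReal) ∈ O ∩ Set.Ioo a b := ⟨hIco ⟨hθI.1.le, hθd⟩, hθI⟩
  exact hOsub this θ rfl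

lemma llf_bound (hab : a < b) {p : ℝ → Prop} (h : ∀ᶠ θ in leftLimFilter a b, p θ) :
    ∃ d : EReal, d < b ∧ ∀ θ : ℝ, (θ : EReal) ∈ Set.Ioo a b → d < (θ : EReal) → p θ := by
  rw [leftLimFilter, Filter.eventually_comap] at h
  rcases mem_nhdsWithin.1 h with ⟨O, hOopen, hbO, hOsub⟩
  rcases exists_Ioc_subset_of_mem_nhds (hOopen.mem_nhds hbO) ⟨a, hab⟩ with ⟨d, hd, hIoc⟩
  refine ⟨d, hd, fun θ hθI hθd => ?_⟩
  have : (θ : EReal) ∈ O ∩ Set.Ioo a b := ⟨hIoc ⟨hθd, hθI.2.le⟩, hθI⟩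
  exact hOsub this θ rfl

end Filters


section MulAux

lemma coe_mul_ne_top (c : ℝ) (hc : 0 ≤ c) {x : EReal} (hx : x ≠ ⊤) : (c : EReal) * x ≠ ⊤ := by
  rcases hc.eq_or_lt with rfl | hc
  · simp
  · induction x with
    | bot => rw [EReal.coe_mul_bot_of_pos hc]; exact bot_ne_top
    | coe r => rw [← EReal.coe_mul]; exact EReal.coe_ne_top _
    | top => exact absurd rfl hx

lemma coe_mul_mono (c : ℝ) (hc : 0 ≤ c) {x y : EReal} (h : x ≤ y) :
    (c : EReal) * x ≤ (c : EReal) * y :=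
  mul_le_mul_of_nonneg_left h (EReal.coe_nonneg.2 hc)

lemma coe_mul_lt_coe (c : ℝ) (hc : 0 < c) {x : EReal} {m : ℝ} (h : x < (m : EReal)) :
    (c : EReal) * x < ((c * m : ℝ) : EReal) := by
  induction x with
  | bot => rw [EReal.coe_mul_bot_of_pos hc]; exact EReal.bot_lt_coe _
  | coe r =>
    rw [← EReal.coe_mul, EReal.coe_lt_coe_iff]
    exact mul_lt_mul_of_pos_left (EReal.coe_lt_coe_iff.1 h) hc
  | top => exact absurd h (not_lt.2 (EReal.coe_lt_top m).le)

lemma coe_lt_coe_mul (c : ℝ) (hc : 0 < c) {x : EReal} {m : ℝ} (h : (m : EReal) < x) :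
    ((c * m : ℝ) : EReal) < (c : EReal) * x := by
  induction x with
  | bot => exact absurd h (not_lt.2 bot_le)
  | coe r =>
    rw [← EReal.coe_mul, EReal.coe_lt_coe_iff]
    exact mul_lt_mul_of_pos_left (EReal.coe_lt_coe_iff.1 h) hc
  | top => rw [EReal.coe_mul_top_of_pos hc]; exact EReal.coe_lt_top _

/-- Convex combination identity for `x ≠ ⊥`. -/
lemma combo_eq' (c : ℝ) (h0 : 0 ≤ c) (h1 : c ≤ 1) :
    ∀ (x : EReal), x ≠ ⊥ → ((1 - c : ℝ) : EReal) * x + (c : EReal) * x = x := by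
  intro x hx
  induction x with
  | top =>
    rcases eq_or_lt_of_le h0 with h | h
    · have h1b : ((1 - 0 : ℝ) : EReal) * (⊤ : EReal) = ⊤ := EReal.coe_mul_top_of_pos (by norm_num)
      rw [← h, h1b]
      norm_num
    · rw [EReal.coe_mul_top_of_pos h, EReal.add_top_of_ne_bot]
      intro hb
      rcases eq_or_lt_of_le h1 with h1' | h1'
      · rw [h1'] at hb; norm_num at hb
      · rw [EReal.coe_mul_top_of_pos (by linarith)] at hb; exact (top_ne_bot : (⊤:EReal) ≠ ⊥) hb
  | coe r =>
    rw [← EReal.coe_mul, ← EReal.coe_mul, ← EReal.coe_add]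
    norm_num [sub_mul, one_mul]
  | bot => exact absurd rfl hx

end MulAux

section TendstoAux

variable {F : Filter ℝ}

lemma tendsto_const_mul (c : ℝ) (hc : 0 ≤ c) {f : ℝ → EReal} {L : EReal}
    (hf : Filter.Tendsto f F (nhds L)) :
    Filter.Tendsto (fun θ => (c : EReal) * f θ) F (nhds ((c : EReal) * L)) := by
  rcases hc.eq_or_lt with rfl | hc
  · simp only [EReal.coe_zero, zero_mul]
    exact tendsto_const_nhds
  · have hcont : ContinuousAt (fun p : EReal × EReal => p.1 * p.2) ((c : EReal), L) := by
      refine EReal.continuousAt_mul ?_ ?_ ?_ ?_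
      · exact Or.inl (EReal.coe_ne_zero.2 hc.ne')
      · exact Or.inl (EReal.coe_ne_zero.2 hc.ne')
      · exact Or.inl (EReal.coe_ne_bot _)
      · exact Or.inl (EReal.coe_ne_top _)
    exact hcont.tendsto.comp (tendsto_const_nhds.prodMk_nhds hf)

lemma tendsto_add_ne_top {f g : ℝ → EReal} {L M : EReal} (hL : L ≠ ⊤) (hM : M ≠ ⊤)
    (hf : Filter.Tendsto f F (nhds L)) (hg : Filter.Tendsto g F (nhds M)) :
    Filter.Tendsto (fun θ => f θ + g θ) F (nhds (L + M)) := by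
  have hcont : ContinuousAt (fun p : EReal × EReal => p.1 + p.2) (L, M) :=
    EReal.continuousAt_add (Or.inl hL) (Or.inr hM)
  exact hcont.tendsto.comp (hf.prodMk_nhds hg)

lemma tendsto_sum_ne_top {ι : Type*} (s : Finset ι) (f : ι → ℝ → EReal) (L : ι → EReal)
    (hne : ∀ j ∈ s, L j ≠ ⊤) (h : ∀ j ∈ s, Filter.Tendsto (f j) F (nhds (L j))) :
    Filter.Tendsto (fun θ => ∑ j ∈ s, f j θ) F (nhds (∑ j ∈ s, L j)) := by
  classical
  induction s using Finset.induction with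
  | empty => simpa using tendsto_const_nhds
  | insert _ _ hmem ih =>
    rename_i j s'
    simp only [Finset.sum_insert hmem]
    exact tendsto_add_ne_top (hne j (Finset.mem_insert_self _ _))
      (sum_ne_top _ _ fun k hk => hne k (Finset.mem_insert_of_mem hk))
      (h j (Finset.mem_insert_self _ _))
      (ih (fun k hk => hne k (Finset.mem_insert_of_mem hk))
        (fun k hk => h k (Finset.mem_insert_of_mem hk)))

lemma tendsto_add_ne_bot {f g : ℝ → EReal} {L M : EReal} (hL : L ≠ ⊥) (hM : M ≠ ⊥)
    (hf : Filter.Tendsto f F (nhds L)) (hg : Filter.Tendsto g F (nhds M)) :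
    Filter.Tendsto (fun θ => f θ + g θ) F (nhds (L + M)) := by
  have hcont : ContinuousAt (fun p : EReal × EReal => p.1 + p.2) (L, M) :=
    EReal.continuousAt_add (Or.inr hM) (Or.inl hL)
  exact hcont.tendsto.comp (hf.prodMk_nhds hg)

lemma tendsto_sum_ne_bot {ι : Type*} (s : Finset ι) (f : ι → ℝ → EReal) (L : ι → EReal)
    (hne : ∀ j ∈ s, L j ≠ ⊥) (h : ∀ j ∈ s, Filter.Tendsto (f j) F (nhds (L j))) :
    Filter.Tendsto (fun θ => ∑ j ∈ s, f j θ) F (nhds (∑ j ∈ s, L j)) := by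
  classical
  induction s using Finset.induction with
  | empty => simpa using tendsto_const_nhds
  | insert _ _ hmem ih =>
    rename_i j s'
    simp only [Finset.sum_insert hmem]
    exact tendsto_add_ne_bot (hne j (Finset.mem_insert_self _ _))
      (sum_ne_bot _ _ fun k hk => hne k (Finset.mem_insert_of_mem hk))
      (h j (Finset.mem_insert_self _ _))
      (ih (fun k hk => hne k (Finset.mem_insert_of_mem hk))
        (fun k hk => h k (Finset.mem_insert_of_mem hk)))

lemma coe_mul_ne_bot (c : ℝ) (hc : 0 ≤ c) {x : EReal} (hx : x ≠ ⊥) : (c : EReal) * x ≠ ⊥ := by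
  rcases hc.eq_or_lt with rfl | hc
  · simp
  · induction x with
    | top => rw [EReal.coe_mul_top_of_pos hc]; exact top_ne_bot
    | coe r => rw [← EReal.coe_mul]; exact EReal.coe_ne_bot _
    | bot => exact absurd rfl hx

end TendstoAux


section Gsel

variable (a b : EReal) (K : ℝ → ℝ)

/-- Canonical solution of `K θ = y` in the interior. -/
noncomputable def Gsel (y : ℝ) : ℝ :=
  sInf {θ : ℝ | (θ : EReal) ∈ Set.Ioo a b ∧ y ≤ K θ}

variable {a b K}

lemma Gsel_bddBelow {y : ℝ}
    (hlow : ∃ d : EReal, a < d ∧ ∀ θ : ℝ, (θ : EReal) ∈ Set.Ioo a b → (θ : EReal) < d → K θ < y) :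
    BddBelow {θ : ℝ | (θ : EReal) ∈ Set.Ioo a b ∧ y ≤ K θ} := by
  obtain ⟨d, had, hd⟩ := hlow
  by_cases hdt : d = ⊤
  · refine ⟨0, fun θ hθ => ?_⟩
    exact absurd (hd θ hθ.1 (hdt ▸ EReal.coe_lt_top θ)) (not_lt.2 hθ.2)
  · have hdb : d ≠ ⊥ := (bot_le.trans_lt had).ne'
    lift d to ℝ using ⟨hdt, hdb⟩ with d₀
    refine ⟨d₀, fun θ hθ => ?_⟩
    by_contra hlt
    push_neg at hlt
    exact absurd (hd θ hθ.1 (EReal.coe_lt_coe_iff.2 hlt)) (not_lt.2 hθ.2)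

lemma Gsel_spec (hcont : ContinuousOn K {θ : ℝ | (θ : EReal) ∈ Set.Ioo a b}) {y : ℝ}
    (hlow : ∃ d : EReal, a < d ∧ ∀ θ : ℝ, (θ : EReal) ∈ Set.Ioo a b → (θ : EReal) < d → K θ < y)
    (hup : ∃ θ : ℝ, (θ : EReal) ∈ Set.Ioo a b ∧ y < K θ) :
    ((Gsel a b K y : ℝ) : EReal) ∈ Set.Ioo a b ∧ K (Gsel a b K y) = y := by
  set A := {θ : ℝ | (θ : EReal) ∈ Set.Ioo a b ∧ y ≤ K θ} with hA
  obtain ⟨θ₂, hθ₂I, hθ₂⟩ := hup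
  have hAne : A.Nonempty := ⟨θ₂, hθ₂I, hθ₂.le⟩
  have hAbdd : BddBelow A := Gsel_bddBelow hlow
  obtain ⟨d, had, hd⟩ := hlow
  have hdt : d ≠ ⊤ := by
    intro hdt
    exact absurd (hd θ₂ hθ₂I (hdt ▸ EReal.coe_lt_top θ₂)) (not_lt.2 hθ₂.le)
  have hdb : d ≠ ⊥ := (bot_le.trans_lt had).ne'
  lift d to ℝ using ⟨hdt, hdb⟩ with d₀
  have hlb : ∀ θ ∈ A, d₀ ≤ θ := by
    intro θ hθ
    by_contra hlt
    push_neg at hlt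
    exact absurd (hd θ hθ.1 (EReal.coe_lt_coe_iff.2 hlt)) (not_lt.2 hθ.2)
  set g := Gsel a b K y with hgdef
  have hgA : g = sInf A := rfl
  have hg_ge : d₀ ≤ g := hgA ▸ le_csInf hAne hlb
  have hg_le : g ≤ θ₂ := hgA ▸ csInf_le hAbdd ⟨hθ₂I, hθ₂.le⟩
  have hgI : ((g : ℝ) : EReal) ∈ Set.Ioo a b := by
    constructor
    · exact lt_of_lt_of_le had (EReal.coe_le_coe_iff.2 hg_ge)
    · exact lt_of_le_of_lt (EReal.coe_le_coe_iff.2 hg_le) hθ₂I.2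
  have hIopen : IsOpen {θ : ℝ | (θ : EReal) ∈ Set.Ioo a b} :=
    continuous_coe_real_ereal.isOpen_preimage _ isOpen_Ioo
  have hKat : ContinuousAt K g := hcont.continuousAt (hIopen.mem_nhds hgI)
  have hKge : y ≤ K g := by
    by_contra hgy
    push_neg at hgy
    have hev : ∀ᶠ θ in nhds g, K θ < y := hKat.tendsto.eventually_lt_const hgy
    rcases Metric.eventually_nhds_iff.1 hev with ⟨ε, hε, hball⟩
    have : sInf A < g + ε := by rw [← hgA]; linarith
    rcases exists_lt_of_csInf_lt hAne this with ⟨θ, hθA, hθlt⟩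
    have hθge : g ≤ θ := hgA ▸ csInf_le hAbdd hθA
    have : dist θ g < ε := by
      rw [Real.dist_eq, abs_sub_lt_iff]
      constructor <;> linarith
    exact absurd (hball this) (not_lt.2 hθA.2)
  have hKle : K g ≤ y := by
    by_contra hgy
    push_neg at hgy
    have hev : ∀ᶠ θ in nhds g, y < K θ := hKat.tendsto.eventually_const_lt hgy
    have hevI : ∀ᶠ θ : ℝ in nhds g, ((θ : ℝ) : EReal) ∈ Set.Ioo a b :=
      Filter.eventually_iff.2 (hIopen.mem_nhds hgI)
    rcases Metric.eventually_nhds_iff.1 (hev.and hevI) with ⟨ε, hε, hball⟩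
    have hmem : (g - ε / 2) ∈ A := by
      have : dist (g - ε / 2) g < ε := by
        rw [Real.dist_eq, abs_sub_lt_iff]
        constructor <;> linarith
      exact ⟨(hball this).2, (hball this).1.le⟩
    have : g ≤ g - ε / 2 := hgA ▸ csInf_le hAbdd hmem
    linarith
  exact ⟨hgI, le_antisymm hKle hKge⟩

lemma Gsel_mono {y y' : ℝ} (hyy : y ≤ y')
    (hlow : ∃ d : EReal, a < d ∧ ∀ θ : ℝ, (θ : EReal) ∈ Set.Ioo a b → (θ : EReal) < d → K θ < y)
    (hup' : ∃ θ : ℝ, (θ : EReal) ∈ Set.Ioo a b ∧ y' < K θ) :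
    Gsel a b K y ≤ Gsel a b K y' := by
  obtain ⟨θ₂, hθ₂I, hθ₂⟩ := hup'
  refine csInf_le_csInf (Gsel_bddBelow hlow) ⟨θ₂, hθ₂I, hθ₂.le⟩ ?_
  intro θ hθ
  exact ⟨hθ.1, hyy.trans hθ.2⟩

end Gsel

end StmtAux
/-- (Proposition 5.3 of the paper, holistic principle.) Under continuity on
`(a,b)` and the stated boundary limits of `ρ_θ(S) = E[S u_θ(S)]` and
`ρ_{i,θ}(X_i) = E[X_i u_{i,θ}(X_i)]`, the endogenous aggregate capital
`K(θ) = (1−β) ρ_θ(S) + β Σ_j ρ_{j,θ}(X_j)` covers the open interval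
`(F_S^{-1+}(0), F_S^{-1}(1))`, and there exist a parameter sampling random variable `Θ`
valued in `[a,b]` (with the risk measures extended to the end-points by their one-sided
limits) with `K(Θ) = S` a.s., such that the holistic shares
`H_i = ρ_{i,Θ}(X_i) − β_i (Σ_j ρ_{j,Θ}(X_j) − ρ_Θ(S))` sum to `S` a.s. -/
theorem stmt14 {Ω : Type*} [MeasurableSpace Ω] (P : Measure Ω) [IsProbabilityMeasure P]
    (n : ℕ) (X : Fin n → Ω → ℝ) (hXmeas : ∀ i, Measurable (X i))
    (hXint : ∀ i, Integrable (X i) P)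
    (S : Ω → ℝ) (hSdef : S = fun ω => ∑ i, X i ω)
    (γ : ℝ) (γi : Fin n → ℝ) (hγ : 0 < γ) (hγi : ∀ i, 0 < γi i)
    (β : ℝ) (βi : Fin n → ℝ)
    (hβ : β = (1/γ) / (1/γ + ∑ j, 1/γi j))
    (hβi : ∀ i, βi i = (1/γi i) / (1/γ + ∑ j, 1/γi j))
    (a b : EReal) (hab : a < b)
    (u : ℝ → ℝ → ℝ) (ui : Fin n → ℝ → ℝ → ℝ)
    (hu_meas : ∀ θ : ℝ, (θ : EReal) ∈ Set.Ioo a b → Measurable (u θ))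
    (hu_nonneg : ∀ θ : ℝ, (θ : EReal) ∈ Set.Ioo a b → ∀ s, 0 ≤ u θ s)
    (hu_mean : ∀ θ : ℝ, (θ : EReal) ∈ Set.Ioo a b →
      Integrable (fun ω => u θ (S ω)) P ∧ ∫ ω, u θ (S ω) ∂P = 1)
    (hui_meas : ∀ i, ∀ θ : ℝ, (θ : EReal) ∈ Set.Ioo a b → Measurable (ui i θ))
    (hui_nonneg : ∀ i, ∀ θ : ℝ, (θ : EReal) ∈ Set.Ioo a b → ∀ s, 0 ≤ ui i θ s)
    (hui_mean : ∀ i, ∀ θ : ℝ, (θ : EReal) ∈ Set.Ioo a b →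
      Integrable (fun ω => ui i θ (X i ω)) P ∧ ∫ ω, ui i θ (X i ω) ∂P = 1)
    (ρS : ℝ → ℝ) (hρS : ∀ θ, ρS θ = ∫ ω, S ω * u θ (S ω) ∂P)
    (ρX : Fin n → ℝ → ℝ) (hρX : ∀ i θ, ρX i θ = ∫ ω, X i ω * ui i θ (X i ω) ∂P)
    (hρS_int : ∀ θ : ℝ, (θ : EReal) ∈ Set.Ioo a b →
      Integrable (fun ω => S ω * u θ (S ω)) P)
    (hρX_int : ∀ i, ∀ θ : ℝ, (θ : EReal) ∈ Set.Ioo a b →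
      Integrable (fun ω => X i ω * ui i θ (X i ω)) P)
    (hρS_cont : ContinuousOn ρS {θ : ℝ | (θ : EReal) ∈ Set.Ioo a b})
    (hρS_lima : Filter.Tendsto (fun θ : ℝ => ((ρS θ : ℝ) : EReal)) (rightLimFilter a b)
      (nhds (rq0 P S)))
    (hρS_limb : Filter.Tendsto (fun θ : ℝ => ((ρS θ : ℝ) : EReal)) (leftLimFilter a b)
      (nhds (lq1 P S)))
    (hρX_cont : ∀ i, ContinuousOn (ρX i) {θ : ℝ | (θ : EReal) ∈ Set.Ioo a b})
    (hρX_lima : ∀ i, Filter.Tendsto (fun θ : ℝ => ((ρX i θ : ℝ) : EReal))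
      (rightLimFilter a b) (nhds (rq0 P (X i))))
    (hρX_limb : ∀ i, Filter.Tendsto (fun θ : ℝ => ((ρX i θ : ℝ) : EReal))
      (leftLimFilter a b) (nhds (lq1 P (X i))))
    (K : ℝ → ℝ) (hK : ∀ θ, K θ = (1 - β) * ρS θ + β * ∑ j, ρX j θ) :
    (∀ y : ℝ, rq0 P S < (y : EReal) → (y : EReal) < lq1 P S →
      ∃ θ : ℝ, (θ : EReal) ∈ Set.Ioo a b ∧ K θ = y) ∧
    ∃ (Θ : Ω → EReal) (r : EReal → EReal) (ri : Fin n → EReal → EReal),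
      Measurable Θ ∧ (∀ ω, Θ ω ∈ Set.Icc a b) ∧
      (∀ θ : ℝ, (θ : EReal) ∈ Set.Ioo a b →
        r (θ : EReal) = ((ρS θ : ℝ) : EReal) ∧
        ∀ i, ri i (θ : EReal) = ((ρX i θ : ℝ) : EReal)) ∧
      r a = rq0 P S ∧ r b = lq1 P S ∧
      (∀ i, ri i a = rq0 P (X i) ∧ ri i b = lq1 P (X i)) ∧
      (∀ᵐ ω ∂P, ((1 - β : ℝ) : EReal) * r (Θ ω) + ((β : ℝ) : EReal) * ∑ j, ri j (Θ ω)
        = ((S ω : ℝ) : EReal)) ∧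
      (∀ᵐ ω ∂P, (∑ i, (ri i (Θ ω) - ((βi i : ℝ) : EReal) * ((∑ j, ri j (Θ ω)) - r (Θ ω))))
        = ((S ω : ℝ) : EReal)) := by
  classical
  -- basic scalar facts
  have hγinv : 0 < 1/γ := by positivity
  have hsum_nonneg : 0 ≤ ∑ j, 1/γi j :=
    Finset.sum_nonneg fun j _ => le_of_lt (by have := hγi j; positivity)
  have hDpos : 0 < 1/γ + ∑ j, 1/γi j := by linarith
  have hβpos : 0 < β := hβ ▸ div_pos hγinv hDpos
  have hβ1 : β ≤ 1 := by
    rw [hβ, div_le_one hDpos]; linarith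
  have h1β : 0 ≤ 1 - β := by linarith
  have hβisum : ∑ i, βi i = 1 - β := by
    have h1 : ∑ i, βi i = (∑ i, 1/γi i) / (1/γ + ∑ j, 1/γi j) := by
      simp only [hβi]
      rw [← Finset.sum_div]
    rw [h1, hβ, eq_sub_iff_add_eq, ← add_div, div_eq_one_iff_eq hDpos.ne']
    ring
  have hSmeas : Measurable S := by
    rw [hSdef]; exact Finset.measurable_sum _ fun i _ => hXmeas i
  -- quantile facts
  have hmS_ne_top : rq0 P S ≠ ⊤ := StmtAux.rq0_ne_top P S
  have hMS_ne_bot : lq1 P S ≠ ⊥ := StmtAux.lq1_ne_bot P S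
  have hXj_ne_top : ∀ j, rq0 P (X j) ≠ ⊤ := fun j => StmtAux.rq0_ne_top P (X j)
  have hXj_ne_bot : ∀ j, lq1 P (X j) ≠ ⊥ := fun j => StmtAux.lq1_ne_bot P (X j)
  have hcA_ne_top : (∑ j, rq0 P (X j)) ≠ ⊤ :=
    StmtAux.sum_ne_top _ _ fun j _ => hXj_ne_top j
  have hcB_ne_bot : (∑ j, lq1 P (X j)) ≠ ⊥ :=
    StmtAux.sum_ne_bot _ _ fun j _ => hXj_ne_bot j
  have haeS : ∀ᵐ ω ∂P, rq0 P S ≤ ((S ω : ℝ) : EReal) ∧ ((S ω : ℝ) : EReal) ≤ lq1 P S :=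
    (StmtAux.ae_rq0_le P S).and (StmtAux.ae_le_lq1 P S)
  have hcA_le : (∑ j, rq0 P (X j)) ≤ rq0 P S := by
    have haeX : ∀ᵐ ω ∂P, ∀ j, rq0 P (X j) ≤ ((X j ω : ℝ) : EReal) :=
      (MeasureTheory.ae_all_iff).2 fun j => StmtAux.ae_rq0_le P (X j)
    have haesum : ∀ᵐ ω ∂P, (∑ j, rq0 P (X j)) ≤ ((S ω : ℝ) : EReal) := by
      filter_upwards [haeX] with ω hω
      calc (∑ j, rq0 P (X j)) ≤ ∑ j, ((X j ω : ℝ) : EReal) :=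
            Finset.sum_le_sum fun j _ => hω j
        _ = ((S ω : ℝ) : EReal) := by rw [hSdef]; exact (StmtAux.coe_sum _ _).symm
    by_contra hlt
    push_neg at hlt
    rcases EReal.exists_between_coe_real hlt with ⟨z, hz1, hz2⟩
    have hz0 : P {ω | S ω ≤ z} = 0 := by
      refine measure_mono_null ?_ (MeasureTheory.ae_iff.1 haesum)
      intro ω hω
      simp only [Set.mem_setOf_eq, not_le]
      exact lt_of_le_of_lt (EReal.coe_le_coe_iff.2 hω) hz2
    have : (z : EReal) ≤ rq0 P S := le_sSup ⟨z, hz0, rfl⟩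
    exact absurd this (not_le.2 hz1)
  have hle_cB : lq1 P S ≤ ∑ j, lq1 P (X j) := by
    have haeX : ∀ᵐ ω ∂P, ∀ j, ((X j ω : ℝ) : EReal) ≤ lq1 P (X j) :=
      (MeasureTheory.ae_all_iff).2 fun j => StmtAux.ae_le_lq1 P (X j)
    have haesum : ∀ᵐ ω ∂P, ((S ω : ℝ) : EReal) ≤ ∑ j, lq1 P (X j) := by
      filter_upwards [haeX] with ω hω
      calc ((S ω : ℝ) : EReal) = ∑ j, ((X j ω : ℝ) : EReal) := by
            rw [hSdef]; exact StmtAux.coe_sum _ _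
        _ ≤ ∑ j, lq1 P (X j) := Finset.sum_le_sum fun j _ => hω j
    by_contra hlt
    push_neg at hlt
    rcases EReal.exists_between_coe_real hlt with ⟨z, hz1, hz2⟩
    have hz0 : P {ω | z < S ω} = 0 := by
      refine measure_mono_null ?_ (MeasureTheory.ae_iff.1 haesum)
      intro ω hω
      simp only [Set.mem_setOf_eq, not_le]
      exact lt_trans hz1 (EReal.coe_lt_coe_iff.2 hω)
    have : lq1 P S ≤ (z : EReal) := sInf_le ⟨z, hz0, rfl⟩
    exact absurd this (not_le.2 hz2)
  -- the boundary limits of K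
  set Ka : EReal := ((1 - β : ℝ) : EReal) * rq0 P S + ((β : ℝ) : EReal) * ∑ j, rq0 P (X j)
    with hKadef
  set Kb : EReal := ((1 - β : ℝ) : EReal) * lq1 P S + ((β : ℝ) : EReal) * ∑ j, lq1 P (X j)
    with hKbdef
  have hKa_le : Ka ≤ rq0 P S := by
    calc Ka ≤ ((1 - β : ℝ) : EReal) * rq0 P S + ((β : ℝ) : EReal) * rq0 P S :=
          add_le_add (le_refl _) (StmtAux.coe_mul_mono β hβpos.le hcA_le)
      _ = rq0 P S := StmtAux.combo_eq β hβpos.le hβ1 _ hmS_ne_top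
  have hMS_le_Kb : lq1 P S ≤ Kb := by
    calc lq1 P S = ((1 - β : ℝ) : EReal) * lq1 P S + ((β : ℝ) : EReal) * lq1 P S :=
          (StmtAux.combo_eq' β hβpos.le hβ1 _ hMS_ne_bot).symm
      _ ≤ Kb := add_le_add (le_refl _) (StmtAux.coe_mul_mono β hβpos.le hle_cB)
  have hKcoe : ∀ θ : ℝ, ((K θ : ℝ) : EReal) =
      ((1 - β : ℝ) : EReal) * ((ρS θ : ℝ) : EReal)
        + ((β : ℝ) : EReal) * ∑ j, ((ρX j θ : ℝ) : EReal) := by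
    intro θ
    rw [hK θ, EReal.coe_add, EReal.coe_mul, EReal.coe_mul, StmtAux.coe_sum]
  have htendA : Filter.Tendsto (fun θ : ℝ => ((K θ : ℝ) : EReal)) (rightLimFilter a b)
      (nhds Ka) := by
    simp only [hKcoe, hKadef]
    exact StmtAux.tendsto_add_ne_top
      (StmtAux.coe_mul_ne_top _ h1β hmS_ne_top)
      (StmtAux.coe_mul_ne_top _ hβpos.le hcA_ne_top)
      (StmtAux.tendsto_const_mul _ h1β hρS_lima)
      (StmtAux.tendsto_const_mul _ hβpos.le
        (StmtAux.tendsto_sum_ne_top _ _ _ (fun j _ => hXj_ne_top j) (fun j _ => hρX_lima j)))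
  have htendB : Filter.Tendsto (fun θ : ℝ => ((K θ : ℝ) : EReal)) (leftLimFilter a b)
      (nhds Kb) := by
    simp only [hKcoe, hKbdef]
    exact StmtAux.tendsto_add_ne_bot
      (StmtAux.coe_mul_ne_bot _ h1β hMS_ne_bot)
      (StmtAux.coe_mul_ne_bot _ hβpos.le hcB_ne_bot)
      (StmtAux.tendsto_const_mul _ h1β hρS_limb)
      (StmtAux.tendsto_const_mul _ hβpos.le
        (StmtAux.tendsto_sum_ne_bot _ _ _ (fun j _ => hXj_ne_bot j) (fun j _ => hρX_limb j)))
  -- continuity of K, connectedness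
  have hKcont : ContinuousOn K {θ : ℝ | (θ : EReal) ∈ Set.Ioo a b} := by
    have hKfun : K = fun θ => (1 - β) * ρS θ + β * ∑ j, ρX j θ := funext hK
    rw [hKfun]
    exact (continuousOn_const.mul hρS_cont).add
      (continuousOn_const.mul (continuousOn_finset_sum _ fun j _ => hρX_cont j))
  have hIconn : Set.OrdConnected {θ : ℝ | (θ : EReal) ∈ Set.Ioo a b} := by
    refine ⟨fun θ₁ h₁ θ₂ h₂ θ hθ => ?_⟩
    exact ⟨h₁.1.trans_le (EReal.coe_le_coe_iff.2 hθ.1),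
      lt_of_le_of_lt (EReal.coe_le_coe_iff.2 hθ.2) h₂.2⟩
  -- eventual bounds
  have hlow : ∀ y : ℝ, Ka < (y : EReal) →
      ∃ d : EReal, a < d ∧ ∀ θ : ℝ, (θ : EReal) ∈ Set.Ioo a b → (θ : EReal) < d → K θ < y := by
    intro y hy
    exact StmtAux.rlf_bound hab
      ((htendA.eventually_lt_const hy).mono fun θ h => EReal.coe_lt_coe_iff.1 h)
  have hup : ∀ y : ℝ, (y : EReal) < Kb →
      ∃ θ : ℝ, (θ : EReal) ∈ Set.Ioo a b ∧ y < K θ := by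
    intro y hy
    exact StmtAux.llf_exists hab
      ((htendB.eventually_const_lt hy).mono fun θ h => EReal.coe_lt_coe_iff.1 h)
  -- Part 1
  have part1 : ∀ y : ℝ, rq0 P S < (y : EReal) → (y : EReal) < lq1 P S →
      ∃ θ : ℝ, (θ : EReal) ∈ Set.Ioo a b ∧ K θ = y := by
    intro y h1 h2
    have hKay : Ka < (y : EReal) := hKa_le.trans_lt h1
    have hyKb : (y : EReal) < Kb := h2.trans_le hMS_le_Kb
    obtain ⟨θ₁, hθ₁I, hθ₁⟩ := StmtAux.rlf_exists hab
      ((htendA.eventually_lt_const hKay).mono fun θ h => EReal.coe_lt_coe_iff.1 h)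
    obtain ⟨θ₂, hθ₂I, hθ₂⟩ := hup y hyKb
    obtain ⟨θ, hθI, hKθ⟩ := (hIconn.isPreconnected).intermediate_value hθ₁I hθ₂I hKcont
      ⟨hθ₁.le, hθ₂.le⟩
    exact ⟨θ, hθI, hKθ⟩
  -- the canonical interior selection
  have hGspec : ∀ y : ℝ, Ka < (y : EReal) → (y : EReal) < Kb →
      ((StmtAux.Gsel a b K y : ℝ) : EReal) ∈ Set.Ioo a b ∧ K (StmtAux.Gsel a b K y) = y :=
    fun y h1 h2 => StmtAux.Gsel_spec hKcont (hlow y h1) (hup y h2)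
  have hGmono : ∀ y y' : ℝ, Ka < (y : EReal) → (y' : EReal) < Kb → y ≤ y' →
      StmtAux.Gsel a b K y ≤ StmtAux.Gsel a b K y' :=
    fun y y' h1 h2 hyy => StmtAux.Gsel_mono hyy (hlow y h1) (hup y' h2)
  -- the sampling map
  set T : ℝ → EReal := fun y =>
    if (y : EReal) ≤ Ka then a else if Kb ≤ (y : EReal) then b
      else ((StmtAux.Gsel a b K y : ℝ) : EReal) with hTdef
  have hTmem : ∀ y : ℝ, T y ∈ Set.Icc a b := by
    intro y
    rw [hTdef]
    by_cases h1 : (y : EReal) ≤ Ka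
    · simp only [h1, if_pos]
      exact ⟨le_refl a, hab.le⟩
    · by_cases h2 : Kb ≤ (y : EReal)
      · simp only [h1, h2, if_neg, if_pos, ite_true, ite_false]
        exact ⟨hab.le, le_refl b⟩
      · simp only [h1, h2, if_neg, ite_false]
        have := (hGspec y (not_le.1 h1) (not_le.1 h2)).1
        exact ⟨this.1.le, this.2.le⟩
  have hTmeas : Measurable T := by
    have hU1 : MeasurableSet {y : ℝ | (y : EReal) ≤ Ka} :=
      measurable_coe_real_ereal measurableSet_Iic
    have hU2 : MeasurableSet {y : ℝ | Kb ≤ (y : EReal)} :=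
      measurable_coe_real_ereal measurableSet_Ici
    have hU1' : MeasurableSet {y : ℝ | Ka < (y : EReal)} :=
      measurable_coe_real_ereal measurableSet_Ioi
    have hV : ∀ c : EReal, MeasurableSet {y : ℝ | Ka < (y : EReal) ∧ (y : EReal) < Kb ∧
        ((StmtAux.Gsel a b K y : ℝ) : EReal) < c} := by
      intro c
      apply Set.OrdConnected.measurableSet
      refine ⟨fun y₁ h₁ y₃ h₃ y₂ hy₂ => ?_⟩
      have ha2 : Ka < (y₂ : EReal) := h₁.1.trans_le (EReal.coe_le_coe_iff.2 hy₂.1)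
      have hb2 : (y₂ : EReal) < Kb := (EReal.coe_le_coe_iff.2 hy₂.2).trans_lt h₃.2.1
      refine ⟨ha2, hb2, lt_of_le_of_lt ?_ h₃.2.2⟩
      exact EReal.coe_le_coe_iff.2 (hGmono y₂ y₃ ha2 h₃.2.1 hy₂.2)
    refine measurable_of_Iio fun c => ?_
    by_cases hac : a < c <;> by_cases hbc : b < c
    · have heq : T ⁻¹' (Set.Iio c) = {y : ℝ | (y : EReal) ≤ Ka} ∪
          ({y : ℝ | Kb ≤ (y : EReal)} ∪ {y : ℝ | Ka < (y : EReal) ∧ (y : EReal) < Kb ∧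
            ((StmtAux.Gsel a b K y : ℝ) : EReal) < c}) := by
        ext y
        simp only [Set.mem_preimage, Set.mem_Iio, hTdef, Set.mem_union, Set.mem_setOf_eq]
        split_ifs with h1 h2
        · exact iff_of_true hac (Or.inl h1)
        · exact iff_of_true hbc (Or.inr (Or.inl h2))
        · constructor
          · intro h
            exact Or.inr (Or.inr ⟨not_le.1 h1, not_le.1 h2, h⟩)
          · rintro (h | h | h)
            · exact absurd h h1
            · exact absurd h h2
            · exact h.2.2
      rw [heq]
      exact hU1.union (hU2.union (hV c))
    · have heq : T ⁻¹' (Set.Iio c) = {y : ℝ | (y : EReal) ≤ Ka} ∪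
          {y : ℝ | Ka < (y : EReal) ∧ (y : EReal) < Kb ∧
            ((StmtAux.Gsel a b K y : ℝ) : EReal) < c} := by
        ext y
        simp only [Set.mem_preimage, Set.mem_Iio, hTdef, Set.mem_union, Set.mem_setOf_eq]
        split_ifs with h1 h2
        · exact iff_of_true hac (Or.inl h1)
        · refine iff_of_false hbc ?_
          rintro (h | h)
          · exact h1 h
          · exact absurd h.2.1 (not_lt.2 h2)
        · constructor
          · intro h
            exact Or.inr ⟨not_le.1 h1, not_le.1 h2, h⟩
          · rintro (h | h)
            · exact absurd h h1
            · exact h.2.2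
      rw [heq]
      exact hU1.union (hV c)
    · have heq : T ⁻¹' (Set.Iio c) = ({y : ℝ | Kb ≤ (y : EReal)} ∩ {y : ℝ | Ka < (y : EReal)}) ∪
          {y : ℝ | Ka < (y : EReal) ∧ (y : EReal) < Kb ∧
            ((StmtAux.Gsel a b K y : ℝ) : EReal) < c} := by
        ext y
        simp only [Set.mem_preimage, Set.mem_Iio, hTdef, Set.mem_union, Set.mem_inter_iff,
          Set.mem_setOf_eq]
        split_ifs with h1 h2
        · refine iff_of_false hac ?_
          rintro (⟨hh, hh2⟩ | hh)
          · exact absurd hh2 (not_lt.2 h1)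
          · exact absurd hh.1 (not_lt.2 h1)
        · exact iff_of_true hbc (Or.inl ⟨h2, not_le.1 h1⟩)
        · constructor
          · intro h
            exact Or.inr ⟨not_le.1 h1, not_le.1 h2, h⟩
          · rintro (⟨hh, _⟩ | hh)
            · exact absurd hh h2
            · exact hh.2.2
      rw [heq]
      exact (hU2.inter hU1').union (hV c)
    · have heq : T ⁻¹' (Set.Iio c) = {y : ℝ | Ka < (y : EReal) ∧ (y : EReal) < Kb ∧
          ((StmtAux.Gsel a b K y : ℝ) : EReal) < c} := by
        ext y
        simp only [Set.mem_preimage, Set.mem_Iio, hTdef, Set.mem_setOf_eq]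
        split_ifs with h1 h2
        · refine iff_of_false hac ?_
          intro hh
          exact absurd hh.1 (not_lt.2 h1)
        · refine iff_of_false hbc ?_
          intro hh
          exact absurd hh.2.1 (not_lt.2 h2)
        · constructor
          · intro h
            exact ⟨not_le.1 h1, not_le.1 h2, h⟩
          · intro h
            exact h.2.2
      rw [heq]
      exact hV c
  -- the extended risk measures
  set r : EReal → EReal := fun x => if x = a then rq0 P S else if x = b then lq1 P S
    else ((ρS x.toReal : ℝ) : EReal) with hrdef
  set ri : Fin n → EReal → EReal := fun i x => if x = a then rq0 P (X i)
    else if x = b then lq1 P (X i) else ((ρX i x.toReal : ℝ) : EReal) with hridef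
  have hrint : ∀ θ : ℝ, (θ : EReal) ∈ Set.Ioo a b →
      r ((θ : ℝ) : EReal) = ((ρS θ : ℝ) : EReal) := by
    intro θ hθ
    rw [hrdef]
    simp only [hθ.1.ne', hθ.2.ne, if_false, EReal.toReal_coe]
  have hriint : ∀ i, ∀ θ : ℝ, (θ : EReal) ∈ Set.Ioo a b →
      ri i ((θ : ℝ) : EReal) = ((ρX i θ : ℝ) : EReal) := by
    intro i θ hθ
    rw [hridef]
    simp only [hθ.1.ne', hθ.2.ne, if_false, EReal.toReal_coe]
  have hra : r a = rq0 P S := by simp [hrdef]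
  have hrb : r b = lq1 P S := by rw [hrdef]; simp [hab.ne']
  have hria : ∀ i, ri i a = rq0 P (X i) := by intro i; simp [hridef]
  have hrib : ∀ i, ri i b = lq1 P (X i) := by intro i; rw [hridef]; simp [hab.ne']
  -- the key pointwise identity
  have hkey : ∀ᵐ ω ∂P,
      (((1 - β : ℝ) : EReal) * r (T (S ω)) + ((β : ℝ) : EReal) * ∑ j, ri j (T (S ω))
        = ((S ω : ℝ) : EReal)) ∧
      ((∑ i, (ri i (T (S ω)) - ((βi i : ℝ) : EReal) * ((∑ j, ri j (T (S ω))) - r (T (S ω)))))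
        = ((S ω : ℝ) : EReal)) := by
    filter_upwards [haeS] with ω hω
    obtain ⟨hm, hM⟩ := hω
    set y := S ω with hydef
    simp only [hTdef]
    by_cases h1 : (y : EReal) ≤ Ka
    · rw [if_pos h1]
      have hKa_eq : Ka = (y : EReal) := le_antisymm (hKa_le.trans hm) h1
      have hmS_eq : rq0 P S = (y : EReal) := le_antisymm hm (h1.trans hKa_le)
      have hcA_eq : (∑ j, rq0 P (X j)) = (y : EReal) := by
        refine le_antisymm (hcA_le.trans_eq hmS_eq) ?_
        by_contra hc
        push_neg at hc
        have hlt : Ka < (y : EReal) := by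
          rw [hKadef, hmS_eq, ← EReal.coe_mul]
          have h2 : (((1 - β) * y : ℝ) : EReal) + ((β : ℝ) : EReal) * ∑ j, rq0 P (X j)
              < (((1 - β) * y : ℝ) : EReal) + ((β * y : ℝ) : EReal) :=
            EReal.add_lt_add_left_coe (StmtAux.coe_mul_lt_coe β hβpos hc) _
          refine h2.trans_eq ?_
          rw [← EReal.coe_add, EReal.coe_eq_coe_iff]
          ring
        exact absurd hKa_eq hlt.ne
      have hra' : r a = (y : EReal) := by rw [hra]; exact hmS_eq
      have hria' : (∑ j, ri j a) = (y : EReal) := by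
        simp only [hria]
        exact hcA_eq
      constructor
      · rw [hra', hria', ← EReal.coe_mul, ← EReal.coe_mul, ← EReal.coe_add,
          EReal.coe_eq_coe_iff]
        ring
      · have hsub : (∑ j, ri j a) - r a = 0 := by
          rw [hra', hria', ← EReal.coe_sub]
          norm_num
        calc (∑ i, (ri i a - ((βi i : ℝ) : EReal) * ((∑ j, ri j a) - r a)))
            = ∑ i, ri i a := by
              refine Finset.sum_congr rfl fun i _ => ?_
              rw [hsub, mul_zero, sub_zero]
          _ = (y : EReal) := hria'
    · by_cases h2 : Kb ≤ (y : EReal)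
      · rw [if_neg h1, if_pos h2]
        have hKb_eq : Kb = (y : EReal) := le_antisymm h2 (hM.trans hMS_le_Kb)
        have hMS_eq : lq1 P S = (y : EReal) := le_antisymm (hMS_le_Kb.trans h2) hM
        have hcB_eq : (∑ j, lq1 P (X j)) = (y : EReal) := by
          refine le_antisymm ?_ (hMS_eq ▸ hle_cB)
          by_contra hc
          push_neg at hc
          have hlt : (y : EReal) < Kb := by
            rw [hKbdef, hMS_eq, ← EReal.coe_mul]
            have h3 : (((1 - β) * y : ℝ) : EReal) + ((β * y : ℝ) : EReal)
                < (((1 - β) * y : ℝ) : EReal) + ((β : ℝ) : EReal) * ∑ j, lq1 P (X j) :=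
              EReal.add_lt_add_left_coe (StmtAux.coe_lt_coe_mul β hβpos hc) _
            refine Eq.trans_lt ?_ h3
            rw [← EReal.coe_add, EReal.coe_eq_coe_iff]
            ring
          exact absurd hKb_eq hlt.ne'
        have hrb' : r b = (y : EReal) := by rw [hrb]; exact hMS_eq
        have hrib' : (∑ j, ri j b) = (y : EReal) := by
          simp only [hrib]
          exact hcB_eq
        constructor
        · rw [hrb', hrib', ← EReal.coe_mul, ← EReal.coe_mul, ← EReal.coe_add,
            EReal.coe_eq_coe_iff]
          ring
        · have hsub : (∑ j, ri j b) - r b = 0 := by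
            rw [hrb', hrib', ← EReal.coe_sub]
            norm_num
          calc (∑ i, (ri i b - ((βi i : ℝ) : EReal) * ((∑ j, ri j b) - r b)))
              = ∑ i, ri i b := by
                refine Finset.sum_congr rfl fun i _ => ?_
                rw [hsub, mul_zero, sub_zero]
            _ = (y : EReal) := hrib'
      · rw [if_neg h1, if_neg h2]
        have nh1 : Ka < (y : EReal) := not_le.1 h1
        have nh2 : (y : EReal) < Kb := not_le.1 h2
        obtain ⟨hGI, hKG⟩ := hGspec y nh1 nh2
        set g := StmtAux.Gsel a b K y with hgdef
        have hKG' : (1 - β) * ρS g + β * ∑ j, ρX j g = y := by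
          rw [← hK g]
          exact hKG
        have hrg : r ((g : ℝ) : EReal) = ((ρS g : ℝ) : EReal) := hrint g hGI
        have hrig : ∀ i, ri i ((g : ℝ) : EReal) = ((ρX i g : ℝ) : EReal) :=
          fun i => hriint i g hGI
        have hsumg : (∑ j, ri j ((g : ℝ) : EReal)) = ((∑ j, ρX j g : ℝ) : EReal) := by
          simp only [hrig]
          exact (StmtAux.coe_sum _ _).symm
        constructor
        · rw [hrg, hsumg, ← EReal.coe_mul, ← EReal.coe_mul, ← EReal.coe_add,
            EReal.coe_eq_coe_iff]
          exact hKG'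
        · have hterm : ∀ i : Fin n, ri i ((g : ℝ) : EReal)
              - ((βi i : ℝ) : EReal) * ((∑ j, ri j ((g : ℝ) : EReal)) - r ((g : ℝ) : EReal))
              = (((ρX i g - βi i * ((∑ j, ρX j g) - ρS g) : ℝ)) : EReal) := by
            intro i
            rw [hrig i, hsumg, hrg, ← EReal.coe_sub, ← EReal.coe_mul, ← EReal.coe_sub]
          calc (∑ i, (ri i ((g : ℝ) : EReal) - ((βi i : ℝ) : EReal)
                * ((∑ j, ri j ((g : ℝ) : EReal)) - r ((g : ℝ) : EReal))))
              = ((∑ i, (ρX i g - βi i * ((∑ j, ρX j g) - ρS g)) : ℝ) : EReal) := by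
                simp only [hterm]
                exact (StmtAux.coe_sum _ _).symm
            _ = ((y : ℝ) : EReal) := by
                rw [EReal.coe_eq_coe_iff, Finset.sum_sub_distrib, ← Finset.sum_mul, hβisum]
                linear_combination hKG'
  -- conclusion
  refine ⟨part1, fun ω => T (S ω), r, ri, hTmeas.comp hSmeas, fun ω => hTmem (S ω),
    ?_, hra, hrb, ?_, ?_, ?_⟩
  · intro θ hθ
    exact ⟨hrint θ hθ, fun i => hriint i θ hθ⟩
  · intro i
    exact ⟨hria i, hrib i⟩
  · filter_upwards [hkey] with ω h
    exact h.1
  · filter_upwards [hkey] with ω h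
    exact h.2
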